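/- Let P be a PCS on a countable type I and let u ∈ P. Let R(u) be the set of all w ∈ (I → ℝ≥0) such that w has finite support, every value w_a is rational, and for all a ∈ I, w_a > 0 implies w_a < u_a. Then R(u) ⊆ P, R(u) is directed for the pointwise order, and its pointwise supremum is u. (Hence P is an ω-continuous domain.) -/

import Mathlib

open scoped NNReal ENNReal

/-- The pairing `⟨u,u'⟩ = ∑' i, u i * u' i` in `[0,∞]`. -/
noncomputable def pairing {I : Type*} (u u' : I → ℝ≥0) : ℝ≥0∞ :=
  ∑' i, (u i : ℝ≥0∞) * (u' i : ℝ≥0∞)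

/-- The polar of a set of nonnegative vectors. -/
def polar {I : Type*} (X : Set (I → ℝ≥0)) : Set (I → ℝ≥0) :=
  {u' | ∀ u ∈ X, pairing u u' ≤ 1}

/-- A probabilistic coherence space structure on the set `P`. -/
def IsPCS {I : Type*} (P : Set (I → ℝ≥0)) : Prop :=
  polar (polar P) = P ∧
  (∀ a : I, ∃ u ∈ P, 0 < u a) ∧
  (∀ a : I, ∃ A : ℝ≥0, 0 < A ∧ ∀ u ∈ P, u a ≤ A)

theorem pcs_omega_continuous {I : Type*} [Countable I] (P : Set (I → ℝ≥0)) (hP : IsPCS P)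
    (u : I → ℝ≥0) (hu : u ∈ P) (R : Set (I → ℝ≥0))
    (hR : R = {w : I → ℝ≥0 | (Function.support w).Finite ∧ (∀ a, ∃ q : ℚ, (w a : ℝ) = (q : ℝ)) ∧
      ∀ a, 0 < w a → w a < u a}) :
    R ⊆ P ∧ DirectedOn (· ≤ ·) R ∧ IsLUB R u := by
  classical
  obtain ⟨hPP, -, -⟩ := hP
  -- every element of R is pointwise ≤ u
  have hle : ∀ w ∈ R, w ≤ u := by
    intro w hw a
    rw [hR] at hw
    rcases eq_zero_or_pos (w a) with h | h
    · simp [h]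
    · exact (hw.2.2 a h).le
  -- P is downward closed
  have hdown : ∀ w : I → ℝ≥0, w ≤ u → w ∈ P := by
    intro w hwu
    rw [← hPP]
    intro y hy
    have h1 : pairing y w ≤ pairing y u := by
      apply ENNReal.tsum_le_tsum
      intro i
      exact mul_le_mul_right (by exact_mod_cast hwu i) _
    rw [← hPP] at hu
    exact h1.trans (hu y hy)
  refine ⟨fun w hw => hdown w (hle w hw), ?_, ?_⟩
  · -- directedness
    intro w₁ h₁ w₂ h₂
    rw [hR] at h₁ h₂
    refine ⟨w₁ ⊔ w₂, ?_, le_sup_left, le_sup_right⟩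
    rw [hR]
    refine ⟨?_, ?_, ?_⟩
    · apply (h₁.1.union h₂.1).subset
      intro b hb
      simp only [Function.mem_support, Pi.sup_apply, ne_eq] at hb
      by_contra hcon
      simp only [Set.mem_union, Function.mem_support, ne_eq, not_or, not_not] at hcon
      rw [hcon.1, hcon.2] at hb
      simp at hb
    · intro a
      rcases le_total (w₁ a) (w₂ a) with h | h
      · obtain ⟨q, hq⟩ := h₂.2.1 a
        exact ⟨q, by rw [Pi.sup_apply, sup_eq_right.mpr h]; exact hq⟩
      · obtain ⟨q, hq⟩ := h₁.2.1 a
        exact ⟨q, by rw [Pi.sup_apply, sup_eq_left.mpr h]; exact hq⟩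
    · intro a ha
      rw [Pi.sup_apply] at ha ⊢
      rcases eq_zero_or_pos (w₁ a) with h1 | h1 <;>
        rcases eq_zero_or_pos (w₂ a) with h2 | h2
      · rw [h1, h2] at ha; simp at ha
      · rw [h1, sup_eq_right.mpr zero_le]; exact h₂.2.2 a h2
      · rw [h2, sup_eq_left.mpr zero_le]; exact h₁.2.2 a h1
      · exact max_lt (h₁.2.2 a h1) (h₂.2.2 a h2)
  · -- IsLUB
    constructor
    · intro w hw
      exact hle w hw
    · intro v hv
      intro a
      by_contra hcon
      push_neg at hcon
      obtain ⟨q, hq1, hq2⟩ := exists_rat_btwn (by exact_mod_cast hcon : (v a : ℝ) < (u a : ℝ))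
      set c : ℝ≥0 := Real.toNNReal q with hc
      have hq0 : (0 : ℝ) ≤ (q : ℝ) := le_trans (v a).coe_nonneg hq1.le
      have hcq : (c : ℝ) = (q : ℝ) := Real.coe_toNNReal _ hq0
      have hvc : v a < c := by rw [← NNReal.coe_lt_coe, hcq]; exact hq1
      have hcu : c < u a := by rw [← NNReal.coe_lt_coe, hcq]; exact hq2
      set w : I → ℝ≥0 := fun b => if b = a then c else 0 with hwdef
      have hwR : w ∈ R := by
        rw [hR]
        refine ⟨?_, ?_, ?_⟩
        · apply Set.Finite.subset (Set.finite_singleton a)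
          intro b hb
          simp only [Function.mem_support, hwdef, ne_eq] at hb
          rcases eq_or_ne b a with h | h
          · exact h
          · simp [h] at hb
        · intro b
          by_cases hb : b = a
          · exact ⟨q, by simp [hwdef, hb, hcq]⟩
          · exact ⟨0, by simp [hwdef, hb]⟩
        · intro b hb
          by_cases hba : b = a
          · simpa [hwdef, hba] using hcu
          · simp [hwdef, hba] at hb
      have := hv hwR a
      simp only [hwdef, if_pos rfl] at this
      exact absurd (lt_of_lt_of_le hvc this) (lt_irrefl _)
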